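/- Let Σ ∈ ℝ^{d̄×d̄} be a nonzero positive semidefinite matrix, ρ ∈ ℝ^{d̄} a vector in the column space of Σ, and β* ∈ ℝ^{d̄} with Σβ* = ρ. Let X ∈ ℝ^{N×d̄}, ε ∈ ℝ^N, y = Xβ* + ε, and n > 0, and suppose ‖XᵀX/n − Σ‖_∞ ≤ q_n, ‖Xᵀε/n‖_∞ ≤ r_n, and |(1/n)‖ε‖² − σ²| ≤ s_n for some reals q_n, r_n, s_n ≥ 0 and σ² ≥ 0; let A_n = σ² + s_n and M ≥ ‖β*‖₁. Let β̂ satisfy the constraints (1/n)‖y − Xβ̂‖² ≤ A_n and ‖β̂‖₁ ≤ M, and let β̂_P be the orthogonal projection of β̂ onto the affine set {β : Σβ = ρ}. Then ‖β̂ − β̂_P‖² ≤ v_n, where v_n := (4 M r_n + 2 s_n + 4 M² q_n) / Λ_min⁺(Σ) and Λ_min⁺(Σ) is the smallest nonzero eigenvalue of Σ. -/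

import Mathlib

namespace Statement10

/-- The ℓ₁-norm of a vector. -/
noncomputable def l1norm {m : ℕ} (v : Fin m → ℝ) : ℝ := ∑ i, |v i|

/-- The squared Euclidean norm of a vector. -/
def sqnorm {m : ℕ} (v : Fin m → ℝ) : ℝ := ∑ i, (v i) ^ 2

/-- The smallest nonzero eigenvalue of a matrix. -/
noncomputable def lamMinPos {m : ℕ} (S : Matrix (Fin m) (Fin m) ℝ) : ℝ :=
  sInf {c : ℝ | c ≠ 0 ∧ ∃ v : Fin m → ℝ, v ≠ 0 ∧ S.mulVec v = c • v}

open Matrix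

lemma l1norm_nonneg {m : ℕ} (v : Fin m → ℝ) : 0 ≤ l1norm v :=
  Finset.sum_nonneg fun _ _ => abs_nonneg _

lemma sqnorm_nonneg {m : ℕ} (v : Fin m → ℝ) : 0 ≤ sqnorm v :=
  Finset.sum_nonneg fun _ _ => sq_nonneg _

lemma eq_zero_of_quad (a b : ℝ) (hb : 0 ≤ b) (h : ∀ t : ℝ, 0 ≤ t^2 * b - 2*t*a) : a = 0 := by
  rcases hb.eq_or_lt with hb0 | hb0
  · have h1 := h a
    have h2 := h (-a)
    nlinarith
  · have h1 := h (a / b)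
    have e : (a/b)^2 * b - 2*(a/b)*a = -(a^2/b) := by field_simp; ring
    rw [e] at h1
    have h2 : a^2 = (a^2/b)*b := by field_simp
    nlinarith

lemma sqnorm_sub_smul {m : ℕ} (u k : Fin m → ℝ) (t : ℝ) :
    sqnorm (u - t • k) = sqnorm u - 2*t*(u ⬝ᵥ k) + t^2 * sqnorm k := by
  simp only [sqnorm, dotProduct, Pi.sub_apply, Pi.smul_apply, smul_eq_mul,
    Finset.mul_sum, ← Finset.sum_sub_distrib, ← Finset.sum_add_distrib]
  exact Finset.sum_congr rfl fun i _ => by ring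

lemma sqnorm_sub {m : ℕ} (u k : Fin m → ℝ) :
    sqnorm (u - k) = sqnorm u - 2*(u ⬝ᵥ k) + sqnorm k := by
  have := sqnorm_sub_smul u k 1
  simpa using this

lemma quad_abs_le {d : ℕ} (E : Matrix (Fin d) (Fin d) ℝ) (q : ℝ)
    (hE : ∀ i j, |E i j| ≤ q) (v : Fin d → ℝ) :
    v ⬝ᵥ E *ᵥ v ≤ q * (l1norm v)^2 := by
  have key : v ⬝ᵥ E *ᵥ v = ∑ i, ∑ j, v i * (E i j * v j) := by
    simp [dotProduct, mulVec, Finset.mul_sum]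
  rw [key]
  calc ∑ i, ∑ j, v i * (E i j * v j) ≤ ∑ i, ∑ j, |v i| * (q * |v j|) := by
        refine Finset.sum_le_sum fun i _ => Finset.sum_le_sum fun j _ => ?_
        calc v i * (E i j * v j) ≤ |v i * (E i j * v j)| := le_abs_self _
          _ = |v i| * (|E i j| * |v j|) := by rw [abs_mul, abs_mul]
          _ ≤ |v i| * (q * |v j|) := by
              have hq : 0 ≤ q := (abs_nonneg _).trans (hE i j)
              gcongr
              exact hE i j
    _ = q * (l1norm v)^2 := by
        simp only [l1norm, sq, Finset.sum_mul_sum]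
        rw [Finset.mul_sum]
        refine Finset.sum_congr rfl fun i _ => ?_
        rw [Finset.mul_sum]
        exact Finset.sum_congr rfl fun j _ => by ring

lemma dot_abs_le {d : ℕ} (v w : Fin d → ℝ) (r : ℝ) (hv : ∀ j, |v j| ≤ r) :
    |v ⬝ᵥ w| ≤ r * l1norm w := by
  calc |v ⬝ᵥ w| ≤ ∑ j, |v j * w j| := Finset.abs_sum_le_sum_abs _ _
    _ ≤ ∑ j, r * |w j| := by
        refine Finset.sum_le_sum fun j _ => ?_
        rw [abs_mul]
        exact mul_le_mul_of_nonneg_right (hv j) (abs_nonneg _)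
    _ = r * l1norm w := by rw [l1norm, Finset.mul_sum]

lemma spectral_facts {d : ℕ} {S : Matrix (Fin d) (Fin d) ℝ}
    (hS : S.PosSemidef) (hne : S ≠ 0) :
    0 < lamMinPos S ∧
    ∀ u : Fin d → ℝ, (∀ k, S.mulVec k = 0 → u ⬝ᵥ k = 0) →
      lamMinPos S * sqnorm u ≤ u ⬝ᵥ S.mulVec u := by
  have hH : S.IsHermitian := hS.1
  set U : Matrix (Fin d) (Fin d) ℝ := (hH.eigenvectorUnitary : Matrix (Fin d) (Fin d) ℝ) with hU
  set μ : Fin d → ℝ := hH.eigenvalues with hμ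
  have hUU : star U * U = 1 := Matrix.mem_unitaryGroup_iff'.mp hH.eigenvectorUnitary.2
  have hUU' : U * star U = 1 := Matrix.mem_unitaryGroup_iff.mp hH.eigenvectorUnitary.2
  have hspec : S = U * Matrix.diagonal μ * star U := by
    have := hH.spectral_theorem
    simpa using this
  have hstarU : star U = Uᵀ := by
    rw [Matrix.star_eq_conjTranspose, Matrix.conjTranspose_eq_transpose_of_trivial]
  set T : Set ℝ := {c : ℝ | c ≠ 0 ∧ ∃ v : Fin d → ℝ, v ≠ 0 ∧ S.mulVec v = c • v} with hT
  have hsub : T ⊆ Set.range μ := by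
    rintro c ⟨hc, v, hv, hSv⟩
    set w : Fin d → ℝ := star U *ᵥ v with hwdef
    have hvw : U *ᵥ w = v := by
      rw [hwdef, mulVec_mulVec, hUU', one_mulVec]
    have hw : w ≠ 0 := by
      intro h0
      apply hv
      rw [← hvw, h0, mulVec_zero]
    have hDw : Matrix.diagonal μ *ᵥ w = c • w := by
      have h1 : star U * S = Matrix.diagonal μ * star U := by
        rw [hspec, ← mul_assoc, ← mul_assoc, hUU, one_mul]
      have : star U *ᵥ (S *ᵥ v) = star U *ᵥ (c • v) := by rw [hSv]
      rwa [mulVec_mulVec, h1, ← mulVec_mulVec, mulVec_smul] at this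
    obtain ⟨i, hi⟩ := Function.ne_iff.mp hw
    refine ⟨i, ?_⟩
    have := congrFun hDw i
    rw [mulVec_diagonal] at this
    have hci : μ i * w i = c * w i := this
    exact mul_right_cancel₀ hi hci
  have hmem : ∀ i, μ i ≠ 0 → μ i ∈ T := by
    intro i hi
    exact ⟨hi, hH.eigenvectorBasis i, fun h => hH.eigenvectorBasis.orthonormal.ne_zero i
        (by simpa using congrArg (WithLp.toLp 2) h),
      hH.mulVec_eigenvectorBasis i⟩
  have hfin : T.Finite := (Set.finite_range μ).subset hsub
  have hnonempty : T.Nonempty := by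
    obtain ⟨v, t, ht, hv, hSv⟩ := hH.exists_eigenvector_of_ne_zero hne
    exact ⟨t, ht, v, hv, hSv⟩
  have hInfT : lamMinPos S ∈ T := hnonempty.csInf_mem hfin
  have hpos : 0 < lamMinPos S := by
    obtain ⟨i, hi⟩ := hsub hInfT
    have h0 : (0:ℝ) ≤ μ i := hS.eigenvalues_nonneg i
    exact lt_of_le_of_ne (hi ▸ h0) (Ne.symm hInfT.1)
  refine ⟨hpos, fun u hu => ?_⟩
  set w : Fin d → ℝ := star U *ᵥ u with hwdef
  have hw0 : ∀ i, μ i = 0 → w i = 0 := by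
    intro i hi
    have hker : S *ᵥ ⇑(hH.eigenvectorBasis i) = 0 := by
      rw [hH.mulVec_eigenvectorBasis i, ← hμ, hi, zero_smul]
    have := hu _ hker
    have hwi : w i = u ⬝ᵥ ⇑(hH.eigenvectorBasis i) := by
      simp only [hwdef, mulVec, dotProduct, Matrix.star_apply, star_trivial]
      refine Finset.sum_congr rfl fun j _ => ?_
      rw [hU, Matrix.IsHermitian.eigenvectorUnitary_apply]
      ring
    rw [hwi, this]
  have hvw : u ᵥ* U = w := by
    rw [hwdef, hstarU, mulVec_transpose]
  have huw : U *ᵥ w = u := by rw [hwdef, mulVec_mulVec, hUU', one_mulVec]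
  have hnorm : sqnorm u = ∑ i, (w i)^2 := by
    have h1 : u ⬝ᵥ u = w ⬝ᵥ w := by
      calc u ⬝ᵥ u = u ⬝ᵥ (U *ᵥ w) := by rw [huw]
        _ = (u ᵥ* U) ⬝ᵥ w := dotProduct_mulVec _ _ _
        _ = w ⬝ᵥ w := by rw [hvw]
    simp only [sqnorm, dotProduct, sq] at h1 ⊢
    exact h1
  have hquad : u ⬝ᵥ S *ᵥ u = ∑ i, μ i * (w i)^2 := by
    calc u ⬝ᵥ S *ᵥ u = u ⬝ᵥ (U *ᵥ (Matrix.diagonal μ *ᵥ w)) := by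
          rw [hspec, ← mulVec_mulVec, ← mulVec_mulVec]
      _ = (u ᵥ* U) ⬝ᵥ (Matrix.diagonal μ *ᵥ w) := dotProduct_mulVec _ _ _
      _ = ∑ i, μ i * (w i)^2 := by
          rw [hvw]
          simp only [dotProduct, mulVec_diagonal]
          exact Finset.sum_congr rfl fun i _ => by ring
  rw [hnorm, hquad, Finset.mul_sum]
  refine Finset.sum_le_sum fun i _ => ?_
  by_cases hμi : μ i = 0
  · rw [hw0 i hμi, hμi]
    simp
  · have hle : lamMinPos S ≤ μ i := csInf_le hfin.bddBelow (hmem i hμi)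
    exact mul_le_mul_of_nonneg_right hle (sq_nonneg _)

/-- The distance of any feasible point `β̂` of the constrained problem from the
affine set `{β : Σβ = ρ}` satisfies `‖β̂ − β̂_P‖² ≤ vₙ`, where `β̂_P` is the orthogonal projection
of `β̂` onto that set and `vₙ = (4Mrₙ + 2sₙ + 4M²qₙ)/Λ_min⁺(Σ)`. -/
theorem statement10 (dbar N : ℕ)
    (S : Matrix (Fin dbar) (Fin dbar) ℝ) (hSpsd : S.PosSemidef) (hSne : S ≠ 0)
    (ρ : Fin dbar → ℝ) (hρ : ∃ w, S.mulVec w = ρ)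
    (βstar : Fin dbar → ℝ) (hβstar : S.mulVec βstar = ρ)
    (X : Matrix (Fin N) (Fin dbar) ℝ) (ε : Fin N → ℝ) (y : Fin N → ℝ)
    (hy : y = X.mulVec βstar + ε)
    (n : ℝ) (hn : 0 < n)
    (qn rn sn σ2 : ℝ) (hqn0 : 0 ≤ qn) (hrn0 : 0 ≤ rn) (hsn0 : 0 ≤ sn) (hσ20 : 0 ≤ σ2)
    (hqn : ∀ i j, |(∑ k, X k i * X k j) / n - S i j| ≤ qn)
    (hrn : ∀ j, |X.transpose.mulVec ε j / n| ≤ rn)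
    (hsn : |sqnorm ε / n - σ2| ≤ sn)
    (M : ℝ) (hM : l1norm βstar ≤ M)
    (βhat : Fin dbar → ℝ)
    (hβhatA : sqnorm (y - X.mulVec βhat) / n ≤ σ2 + sn)
    (hβhatM : l1norm βhat ≤ M)
    (βhatP : Fin dbar → ℝ)
    (hβhatPFeas : S.mulVec βhatP = ρ)
    (hβhatPProj : ∀ β : Fin dbar → ℝ, S.mulVec β = ρ →
      sqnorm (βhat - βhatP) ≤ sqnorm (βhat - β)) :
    sqnorm (βhat - βhatP)
      ≤ (4 * M * rn + 2 * sn + 4 * M ^ 2 * qn) / lamMinPos S := by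
  obtain ⟨hlampos, hspec⟩ := spectral_facts hSpsd hSne
  set u : Fin dbar → ℝ := βhat - βhatP with hudef
  set Δ : Fin dbar → ℝ := βhat - βstar with hΔdef
  -- orthogonality of u to the kernel of S
  have hu : ∀ k, S.mulVec k = 0 → u ⬝ᵥ k = 0 := by
    intro k hk
    apply eq_zero_of_quad (u ⬝ᵥ k) (sqnorm k) (sqnorm_nonneg k)
    intro t
    have hfeas : S.mulVec (βhatP + t • k) = ρ := by
      rw [mulVec_add, mulVec_smul, hk, smul_zero, add_zero, hβhatPFeas]
    have hproj := hβhatPProj _ hfeas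
    have he : βhat - (βhatP + t • k) = u - t • k := by
      rw [hudef]; abel
    rw [he, sqnorm_sub_smul] at hproj
    linarith
  -- S u = S Δ
  have hSu : S.mulVec u = S.mulVec Δ := by
    rw [hudef, hΔdef, mulVec_sub, mulVec_sub, hβstar, hβhatPFeas]
  -- quadratic forms coincide
  have hSymm : Sᵀ = S := by
    rw [← Matrix.conjTranspose_eq_transpose_of_trivial]
    exact hSpsd.1
  have hdot : u ⬝ᵥ S.mulVec u = Δ ⬝ᵥ S.mulVec Δ := by
    calc u ⬝ᵥ S.mulVec u = u ⬝ᵥ S.mulVec Δ := by rw [hSu]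
      _ = (u ᵥ* S) ⬝ᵥ Δ := dotProduct_mulVec _ _ _
      _ = (S.mulVec u) ⬝ᵥ Δ := by rw [← mulVec_transpose, hSymm]
      _ = (S.mulVec Δ) ⬝ᵥ Δ := by rw [hSu]
      _ = Δ ⬝ᵥ S.mulVec Δ := dotProduct_comm _ _
  -- ℓ₁ bound on Δ
  have hM0 : 0 ≤ M := (l1norm_nonneg βstar).trans hM
  have hl1Δ : l1norm Δ ≤ 2 * M := by
    have : l1norm Δ ≤ l1norm βhat + l1norm βstar := by
      rw [l1norm, l1norm, l1norm, ← Finset.sum_add_distrib]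
      exact Finset.sum_le_sum fun i _ => abs_sub _ _
    linarith
  -- statistical bound on the quadratic form
  have hstat : Δ ⬝ᵥ S.mulVec Δ ≤ 4 * M * rn + 2 * sn + 4 * M ^ 2 * qn := by
    set G : Matrix (Fin dbar) (Fin dbar) ℝ := (n⁻¹ : ℝ) • (Xᵀ * X) with hGdef
    have hGentry : ∀ i j, G i j = (∑ k, X k i * X k j) / n := by
      intro i j
      simp [hGdef, Matrix.mul_apply, div_eq_inv_mul]
    have hE : ∀ i j, |(S - G) i j| ≤ qn := by
      intro i j
      have := hqn i j
      rw [Matrix.sub_apply, hGentry, abs_sub_comm]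
      exact this
    have hsplit : Δ ⬝ᵥ S.mulVec Δ = Δ ⬝ᵥ G.mulVec Δ + Δ ⬝ᵥ (S - G).mulVec Δ := by
      have hS' : S = G + (S - G) := by abel
      calc Δ ⬝ᵥ S.mulVec Δ = Δ ⬝ᵥ (G + (S - G)).mulVec Δ := by rw [← hS']
        _ = Δ ⬝ᵥ G.mulVec Δ + Δ ⬝ᵥ (S - G).mulVec Δ := by
            rw [add_mulVec, dotProduct_add]
    have hG : Δ ⬝ᵥ G.mulVec Δ = sqnorm (X.mulVec Δ) / n := by
      calc Δ ⬝ᵥ G.mulVec Δ = Δ ⬝ᵥ ((n⁻¹ : ℝ) • ((Xᵀ * X).mulVec Δ)) := by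
            rw [hGdef, smul_mulVec]
        _ = n⁻¹ * (Δ ⬝ᵥ (Xᵀ *ᵥ (X *ᵥ Δ))) := by rw [dotProduct_smul, mulVec_mulVec]; rfl
        _ = n⁻¹ * ((Δ ᵥ* Xᵀ) ⬝ᵥ (X *ᵥ Δ)) := by rw [dotProduct_mulVec]
        _ = n⁻¹ * ((X *ᵥ Δ) ⬝ᵥ (X *ᵥ Δ)) := by rw [vecMul_transpose]
        _ = sqnorm (X.mulVec Δ) / n := by
            rw [div_eq_inv_mul]
            congr 1
            simp [sqnorm, dotProduct, sq]
    -- the residual bound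
    have hyX : y - X.mulVec βhat = ε - X.mulVec Δ := by
      rw [hy, hΔdef, mulVec_sub]; abel
    have hres : sqnorm ε - 2 * (ε ⬝ᵥ X.mulVec Δ) + sqnorm (X.mulVec Δ) ≤ (σ2 + sn) * n := by
      have h := hβhatA
      rw [hyX, sqnorm_sub] at h
      exact (div_le_iff₀ hn).mp h
    have hcross : |ε ⬝ᵥ X.mulVec Δ / n| ≤ rn * l1norm Δ := by
      have h1 : ε ⬝ᵥ X.mulVec Δ = (Xᵀ *ᵥ ε) ⬝ᵥ Δ := by
        rw [dotProduct_mulVec, ← mulVec_transpose]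
      have h2 : ε ⬝ᵥ X.mulVec Δ / n = (fun j => X.transpose.mulVec ε j / n) ⬝ᵥ Δ := by
        rw [h1, dotProduct, dotProduct, Finset.sum_div]
        exact Finset.sum_congr rfl fun j _ => by ring
      rw [h2]
      exact dot_abs_le _ _ rn hrn
    have hε : σ2 - sn ≤ sqnorm ε / n := by
      have := abs_le.1 hsn
      linarith [this.1]
    have hXΔ : sqnorm (X.mulVec Δ) / n ≤ 2 * sn + 2 * (rn * l1norm Δ) := by
      have hres' : sqnorm ε / n - 2 * (ε ⬝ᵥ X.mulVec Δ / n) + sqnorm (X.mulVec Δ) / n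
          ≤ σ2 + sn := by
        rw [← div_le_iff₀ hn] at hres
        calc sqnorm ε / n - 2 * (ε ⬝ᵥ X.mulVec Δ / n) + sqnorm (X.mulVec Δ) / n
            = (sqnorm ε - 2 * (ε ⬝ᵥ X.mulVec Δ) + sqnorm (X.mulVec Δ)) / n := by ring
          _ ≤ σ2 + sn := hres
      have habs := abs_le.1 hcross
      linarith [habs.1, habs.2, hε]
    have hEbd : Δ ⬝ᵥ (S - G).mulVec Δ ≤ qn * (l1norm Δ)^2 := quad_abs_le _ qn hE Δ
    have hl1sq : (l1norm Δ)^2 ≤ (2*M)^2 := by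
      have := l1norm_nonneg Δ
      nlinarith
    rw [hsplit, hG]
    nlinarith [hXΔ, hEbd, hl1sq, hl1Δ, hrn0, hqn0, l1norm_nonneg Δ]
  -- conclude
  have hmain : lamMinPos S * sqnorm u ≤ 4 * M * rn + 2 * sn + 4 * M ^ 2 * qn := by
    calc lamMinPos S * sqnorm u ≤ u ⬝ᵥ S.mulVec u := hspec u hu
      _ = Δ ⬝ᵥ S.mulVec Δ := hdot
      _ ≤ _ := hstat
  rw [le_div_iff₀ hlampos]
  linarith [hmain]

end Statement10
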